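/- The Schrödinger representation φ_n of the finite Heisenberg group H_n on V_n = Map(ℤ/n, ℂ) is irreducible: any H_n-invariant subspace of V_n is either 0 or all of V_n. -/

import Mathlib

/-! The finite Heisenberg group `H_n = μ_n × ℤ/n × Hom(ℤ/n, ℂˣ)`. -/

/-- The underlying set of the finite Heisenberg group:
`μ_n × (ℤ/n) × Hom(ℤ/n, ℂˣ)`, where `μ_n = rootsOfUnity n ℂ` and characters of `ℤ/n`
are additive characters with values in `ℂˣ`. -/
abbrev Heis (n : ℕ) : Type :=
  (rootsOfUnity n ℂ) × ZMod n × AddChar (ZMod n) ℂˣ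

/-- The value of any character of `ℤ/n` is an `n`-th root of unity. -/
theorem addChar_val_mem (n : ℕ) (α : AddChar (ZMod n) ℂˣ) (a : ZMod n) :
    α a ∈ rootsOfUnity n ℂ := by
  rw [mem_rootsOfUnity, ← AddChar.map_nsmul_eq_pow, nsmul_eq_mul, ZMod.natCast_self, zero_mul,
    AddChar.map_zero_eq_one]

/-- The Heisenberg multiplication `(λ; a, α)·(λ'; a', α') = (λλ'α'(a); a + a', αα')`. -/
def heisMul {n : ℕ} (x y : Heis n) : Heis n :=
  (x.1 * y.1 * ⟨y.2.2 x.2.1, addChar_val_mem n y.2.2 x.2.1⟩, x.2.1 + y.2.1, x.2.2 * y.2.2)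

/-- The identity element `(1; 0, 𝟙)`. -/
def heisOne {n : ℕ} : Heis n := (1, 0, 1)

/-- The inverse `(λ; a, α)⁻¹ = (λ⁻¹ α(a); -a, α⁻¹)`. -/
def heisInv {n : ℕ} (x : Heis n) : Heis n :=
  (x.1⁻¹ * ⟨x.2.2 x.2.1, addChar_val_mem n x.2.2 x.2.1⟩, -x.2.1, x.2.2⁻¹)


/-- The Schrödinger representation of `H_n` on `V_n = Map(ℤ/n, ℂ)`:
`(φ_n(λ; a, α)f)(x) = λ·α(x)·f(x + a)`. -/
def schroedinger {n : ℕ} (g : Heis n) : (ZMod n → ℂ) →ₗ[ℂ] (ZMod n → ℂ) where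
  toFun f := fun x => ((g.1 : ℂˣ) : ℂ) * ((g.2.2 x : ℂˣ) : ℂ) * f (x + g.2.1)
  map_add' f₁ f₂ := by funext x; simp [mul_add]
  map_smul' c f := by funext x; simp [Pi.smul_apply, smul_eq_mul]; ring

/-- The Schrödinger representation of `H_n` on `V_n = Map(ℤ/n, ℂ)` is
irreducible: every `H_n`-invariant subspace of `V_n` is `0` or all of `V_n`. -/
theorem schroedinger_irreducible (n : ℕ) [NeZero n]
    (W : Submodule ℂ (ZMod n → ℂ))
    (hW : ∀ (g : Heis n) (f : ZMod n → ℂ), f ∈ W → schroedinger g f ∈ W) :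
    W = ⊥ ∨ W = ⊤ := by
  by_cases hbot : W = ⊥
  · exact Or.inl hbot
  right
  -- pick a nonzero element of `W`
  obtain ⟨f, hfW, hf0⟩ : ∃ f ∈ W, f ≠ 0 := by
    by_contra h
    push_neg at h
    exact hbot (le_antisymm (fun x hx => (Submodule.mem_bot ℂ).2 (h x hx)) bot_le)
  obtain ⟨x₀, hx₀⟩ : ∃ x, f x ≠ 0 := by
    by_contra h; push_neg at h; exact hf0 (funext h)
  -- primitive n-th root of unity
  have hζ : IsPrimitiveRoot (Complex.exp (2 * Real.pi * Complex.I / n)) n :=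
    Complex.isPrimitiveRoot_exp n (NeZero.ne n)
  set ζ : ℂ := Complex.exp (2 * Real.pi * Complex.I / n) with hζdef
  have hζn : ζ ^ n = 1 := hζ.pow_eq_one
  set ζu : ℂˣ := Units.mk0 ζ (Complex.exp_ne_zero _) with hζudef
  have hζun : ζu ^ n = 1 := by
    ext; simp only [Units.val_pow_eq_pow_val, Units.val_one]; exact hζn
  set ψc : AddChar (ZMod n) ℂ := AddChar.zmodChar n hζn with hψcdef
  set ψu : AddChar (ZMod n) ℂˣ := AddChar.zmodChar n hζun with hψudef
  have hcoe : ∀ a : ZMod n, ((ψu a : ℂˣ) : ℂ) = ψc a := by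
    intro a
    simp [hψcdef, hψudef, AddChar.zmodChar_apply, hζudef]
  -- orthogonality sum
  have hsum : ∀ y : ZMod n, (∑ b : ZMod n, ψc (b * y)) = if y = 0 then (n : ℂ) else 0 := by
    intro y
    have hrw : (∑ b : ZMod n, ψc (b * y)) = ∑ b : ZMod n, (AddChar.mulShift ψc y) b := by
      refine Finset.sum_congr rfl fun b _ => ?_
      rw [AddChar.mulShift_apply, mul_comm]
    split_ifs with hy
    · subst hy
      simp [AddChar.map_zero_eq_one, ZMod.card]
    · have hprim : AddChar.IsPrimitive ψc :=
        AddChar.zmodChar_primitive_of_primitive_root n hζ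
      have h1 : AddChar.mulShift ψc y ≠ 1 := hprim hy
      rw [hrw]
      exact AddChar.sum_eq_zero_of_ne_one h1
  -- the scaled delta function at x₀ is in W
  set g : ZMod n → ℂ := fun x => (if x = x₀ then (n : ℂ) else 0) * f x with hgdef
  have hgW : g ∈ W := by
    have hmem : (∑ b : ZMod n, ψc (-(b * x₀)) • schroedinger (1, 0, AddChar.mulShift ψu b) f)
        ∈ W :=
      Submodule.sum_mem W fun b _ =>
        W.smul_mem _ (hW (1, 0, AddChar.mulShift ψu b) f hfW)
    have heq : g = ∑ b : ZMod n, ψc (-(b * x₀)) • schroedinger (1, 0, AddChar.mulShift ψu b) f := by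
      funext x
      have hterm : ∀ b : ZMod n,
          ψc (-(b * x₀)) * (schroedinger (1, 0, AddChar.mulShift ψu b) f x)
            = ψc (b * (x - x₀)) * f x := by
        intro b
        simp only [schroedinger, LinearMap.coe_mk, AddHom.coe_mk]
        rw [AddChar.mulShift_apply, hcoe]
        have : ((((1 : rootsOfUnity n ℂ) : ℂˣ) : ℂ)) = 1 := by simp
        rw [this, one_mul, add_zero, ← mul_assoc, ← AddChar.map_add_eq_mul]
        congr 2
        ring
      calc g x = (∑ b : ZMod n, ψc (b * (x - x₀))) * f x := by
            rw [hsum (x - x₀), hgdef]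
            simp only [sub_eq_zero]
        _ = ∑ b : ZMod n, ψc (b * (x - x₀)) * f x := by rw [Finset.sum_mul]
        _ = (∑ b : ZMod n, ψc (-(b * x₀)) • schroedinger (1, 0, AddChar.mulShift ψu b) f) x := by
            rw [Finset.sum_apply]
            exact Finset.sum_congr rfl fun b _ => by
              rw [Pi.smul_apply, smul_eq_mul, hterm b]
    rw [heq]; exact hmem
  have hnf : (n : ℂ) * f x₀ ≠ 0 :=
    mul_ne_zero (Nat.cast_ne_zero.mpr (NeZero.ne n)) hx₀
  -- all delta functions are in W
  have hδ : ∀ y : ZMod n, Pi.single y (1 : ℂ) ∈ W := by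
    intro y
    have h1 : ((n : ℂ) * f x₀)⁻¹ • schroedinger (1, x₀ - y, 1) g ∈ W :=
      W.smul_mem _ (hW (1, x₀ - y, 1) g hgW)
    have heq : Pi.single y (1 : ℂ) = ((n : ℂ) * f x₀)⁻¹ • schroedinger (1, x₀ - y, 1) g := by
      funext x
      simp only [schroedinger, LinearMap.coe_mk, AddHom.coe_mk, Pi.smul_apply, smul_eq_mul,
        hgdef]
      have h1 : ((((1 : rootsOfUnity n ℂ) : ℂˣ) : ℂ)) = 1 := by simp
      have h2 : ((((1 : AddChar (ZMod n) ℂˣ) x : ℂˣ) : ℂ)) = 1 := by simp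
      rw [h1, h2, one_mul, one_mul]
      have hcond : x + (x₀ - y) = x₀ ↔ x = y := by
        constructor
        · intro h
          have := congrArg (fun t => t - (x₀ - y)) h
          simpa [sub_sub_cancel] using this
        · rintro rfl; ring
      by_cases hxy : x = y
      · subst hxy
        rw [if_pos (hcond.2 rfl), Pi.single_eq_same]
        field_simp
        rw [add_sub_cancel, mul_div_cancel_left₀ _ (Nat.cast_ne_zero.mpr (NeZero.ne n))]
      · rw [if_neg (fun h => hxy (hcond.1 h)), zero_mul, mul_zero,
          Pi.single_eq_of_ne hxy]
    rw [heq]; exact h1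
  -- conclude
  rw [eq_top_iff]
  intro h _
  have hrepr : h = ∑ y : ZMod n, h y • (Pi.single y (1 : ℂ) : ZMod n → ℂ) := by
    funext x
    rw [Finset.sum_apply]
    simp [Pi.single_apply]
  rw [hrepr]
  exact Submodule.sum_mem W fun y _ => W.smul_mem _ (hδ y)
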